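/- The short exact sequence 1 → A₆'/Z(𝒲₆') → 𝒲₆'/Z(𝒲₆') → S₆ → 1 is not split, where 𝒲₆' = ⟨W₆⁺, i·Id⟩ ∩ ker γ for W₆⁺ the determinant-1 signed permutation matrices in GL₆(ℂ) and γ the product of the nonzero entries. -/

import Mathlib

noncomputable section
open Matrix Complex

/-- The signed permutation matrix with underlying permutation `σ` and signs `a`. -/
def sp (σ : Equiv.Perm (Fin 6)) (a : Fin 6 → ℂ) : Matrix (Fin 6) (Fin 6) ℂ :=
  Matrix.of fun i j => if i = σ j then a j else 0

/-- All entries are `±1`. -/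
def signs (a : Fin 6 → ℂ) : Prop := ∀ k, a k = 1 ∨ a k = -1

/-- The Weyl group of type `B₆`: all signed permutation matrices. -/
def W6Set : Set (GL (Fin 6) ℂ) :=
  {g | ∃ σ a, signs a ∧ (g : Matrix (Fin 6) (Fin 6) ℂ) = sp σ a}

/-- `W₆⁺`: signed permutation matrices of determinant 1. -/
def W6plusSet : Set (GL (Fin 6) ℂ) :=
  {g | ∃ σ a, signs a ∧ (g : Matrix (Fin 6) (Fin 6) ℂ) = sp σ a ∧
    (g : Matrix (Fin 6) (Fin 6) ℂ).det = 1}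

/-- `W₆'` (type `D₆`): signed permutation matrices with product of entries 1. -/
def W6'Set : Set (GL (Fin 6) ℂ) :=
  {g | ∃ σ a, signs a ∧ (∏ k, a k) = 1 ∧ (g : Matrix (Fin 6) (Fin 6) ℂ) = sp σ a}

/-- `A₆'`: diagonal sign matrices with product of entries 1. -/
def A6'Set : Set (GL (Fin 6) ℂ) :=
  {g | ∃ a, signs a ∧ (∏ k, a k) = 1 ∧ (g : Matrix (Fin 6) (Fin 6) ℂ) = Matrix.diagonal a}

/-- `i · Id` as an element of `GL₆(ℂ)`. -/
def iId : GL (Fin 6) ℂ :=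
  ⟨Matrix.diagonal (fun _ => Complex.I), Matrix.diagonal (fun _ => -Complex.I),
    by simp [Matrix.diagonal_mul_diagonal, Complex.I_mul_I],
    by simp [Matrix.diagonal_mul_diagonal, Complex.I_mul_I]⟩

/-- For a monomial matrix, the product of its nonzero entries (γ). -/
def gam (m : Matrix (Fin 6) (Fin 6) ℂ) : ℂ := ∏ j, ∑ i, m i j

/-- `𝒲₆ = ⟨W₆⁺, i·Id⟩`. -/
def CW6Sub : Subgroup (GL (Fin 6) ℂ) := Subgroup.closure (W6plusSet ∪ {iId})

/-- `𝒲₆' = 𝒲₆ ∩ ker γ`. -/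
def CW6'Set : Set (GL (Fin 6) ℂ) :=
  {g | g ∈ CW6Sub ∧ gam (g : Matrix (Fin 6) (Fin 6) ℂ) = 1}

def CW6'Sub : Subgroup (GL (Fin 6) ℂ) := Subgroup.closure CW6'Set

def W6Sub : Subgroup (GL (Fin 6) ℂ) := Subgroup.closure W6Set
def W6plusSub : Subgroup (GL (Fin 6) ℂ) := Subgroup.closure W6plusSet
def W6'Sub : Subgroup (GL (Fin 6) ℂ) := Subgroup.closure W6'Set

set_option maxRecDepth 20000

lemma sp_mul (σ τ : Equiv.Perm (Fin 6)) (a b : Fin 6 → ℂ) :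
    sp σ a * sp τ b = sp (σ * τ) (fun j => a (τ j) * b j) := by
  ext i j
  simp only [sp, Matrix.mul_apply, Matrix.of_apply, Equiv.Perm.mul_apply]
  rw [Finset.sum_eq_single (τ j)]
  · simp; congr
  · intro k _ hk; simp [if_neg hk]
  · simp

lemma sp_apply_eq (σ τ : Equiv.Perm (Fin 6)) (a b : Fin 6 → ℂ)
    (h : sp σ a = sp τ b) (hb : ∀ j, b j ≠ 0) : σ = τ ∧ a = b := by
  have key : ∀ j, σ j = τ j ∧ a j = b j := by
    intro j
    have := congrFun (congrFun h (τ j)) j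
    simp only [sp, Matrix.of_apply, if_pos rfl] at this
    by_cases hc : τ j = σ j
    · rw [if_pos hc] at this; exact ⟨hc.symm, this⟩
    · rw [if_neg hc] at this; exact absurd this.symm (hb j)
  exact ⟨Equiv.ext fun j => (key j).1, funext fun j => (key j).2⟩

lemma sp_eq_perm_mul_diag (σ : Equiv.Perm (Fin 6)) (a : Fin 6 → ℂ) :
    sp σ a = (Equiv.Perm.permMatrix ℂ σ⁻¹) * Matrix.diagonal a := by
  ext i j
  rw [Matrix.mul_apply, Finset.sum_eq_single j]
  · simp only [sp, Matrix.of_apply, Matrix.diagonal_apply_eq,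
      Equiv.Perm.permMatrix, PEquiv.toMatrix, Equiv.toPEquiv_apply, Option.mem_def,
      Option.some.injEq]
    by_cases h : i = σ j
    · rw [if_pos h, if_pos (by rw [h]; simp), one_mul]
    · rw [if_neg h, if_neg (fun hh : σ⁻¹ i = j => h (by rw [← hh]; simp)), zero_mul]
  · intro k _ hk
    rw [Matrix.diagonal_apply_ne _ hk, mul_zero]
  · simp

lemma sp_det (σ : Equiv.Perm (Fin 6)) (a : Fin 6 → ℂ) :
    (sp σ a).det = (Equiv.Perm.sign σ : ℂ) * ∏ j, a j := by
  rw [sp_eq_perm_mul_diag, Matrix.det_mul, Matrix.det_permutation, Matrix.det_diagonal]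
  simp

lemma gam_sp (σ : Equiv.Perm (Fin 6)) (a : Fin 6 → ℂ) : gam (sp σ a) = ∏ j, a j := by
  unfold gam
  congr 1; ext j
  rw [Finset.sum_eq_single (σ j)]
  · simp [sp]
  · intro k _ hk; simp [sp, if_neg hk]
  · simp

lemma sp_one : sp 1 (fun _ => 1) = 1 := by
  ext i j
  simp [sp, Matrix.one_apply, eq_comm]; congr

lemma sp_scalar (c : ℂ) : sp 1 (fun _ => c) = Matrix.diagonal (fun _ => c) := by
  ext i j
  by_cases h : i = j <;> simp [sp, Matrix.diagonal_apply, h, eq_comm]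

lemma gam_one : gam (1 : Matrix (Fin 6) (Fin 6) ℂ) = 1 := by
  rw [← sp_one, gam_sp]; simp

lemma gam_sp_mul (σ τ : Equiv.Perm (Fin 6)) (a b : Fin 6 → ℂ) :
    gam (sp σ a * sp τ b) = gam (sp σ a) * gam (sp τ b) := by
  rw [sp_mul, gam_sp, gam_sp, gam_sp, ← Equiv.prod_comp τ a, ← Finset.prod_mul_distrib]

lemma pm_trans {x y c : ℂ} (hx : x = c ∨ x = -c) (hy : y = c ∨ y = -c) :
    x = y ∨ x = -y := by
  rcases hx with h|h <;> rcases hy with h'|h' <;> simp [h, h']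

lemma pm_pow4 {x c : ℂ} (hx : x = c ∨ x = -c) : x^4 = c^4 := by
  rcases hx with h|h <;> rw [h] <;> ring

lemma pm_pow2 {x c : ℂ} (hx : x = c ∨ x = -c) : x^2 = c^2 := by
  rcases hx with h|h <;> rw [h] <;> ring

def QQ (g : GL (Fin 6) ℂ) : Prop :=
  ∃ σ t, ((g : Matrix (Fin 6) (Fin 6) ℂ) = sp σ t) ∧ (∀ k, t k = t 0 ∨ t k = -(t 0)) ∧
    (t 0)^4 = 1 ∧ (g : Matrix (Fin 6) (Fin 6) ℂ).det = (t 0)^2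

lemma QQ_ne_zero {t : Fin 6 → ℂ} (hpm : ∀ k, t k = t 0 ∨ t k = -(t 0))
    (h4 : (t 0)^4 = 1) : ∀ k, t k ≠ 0 := by
  have h0 : t 0 ≠ 0 := by intro h; rw [h] at h4; simp at h4
  intro k; rcases hpm k with h|h <;> rw [h] <;> simpa using h0

lemma QQ_one : QQ (1 : GL (Fin 6) ℂ) := by
  refine ⟨1, fun _ => 1, ?_, fun k => Or.inl rfl, by norm_num, ?_⟩
  · rw [Units.val_one, sp_one]
  · rw [Units.val_one, Matrix.det_one]; norm_num

lemma QQ_mul {g h : GL (Fin 6) ℂ} (hg : QQ g) (hh : QQ h) : QQ (g * h) := by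
  obtain ⟨σ, a, hga, hapm, ha4, hadet⟩ := hg
  obtain ⟨τ, b, hhb, hbpm, hb4, hbdet⟩ := hh
  have key : ∀ j, a (τ j) * b j = a 0 * b 0 ∨ a (τ j) * b j = -(a 0 * b 0) := by
    intro j
    rcases hapm (τ j) with h1|h1 <;> rcases hbpm j with h2|h2 <;> rw [h1, h2]
    · left; ring
    · right; ring
    · right; ring
    · left; ring
  refine ⟨σ * τ, fun j => a (τ j) * b j, ?_, ?_, ?_, ?_⟩
  · rw [Units.val_mul, hga, hhb, sp_mul]
  · intro k; exact pm_trans (key k) (key 0)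
  · rw [pm_pow4 (key 0), mul_pow, ha4, hb4, one_mul]
  · rw [Units.val_mul, Matrix.det_mul, hadet, hbdet, pm_pow2 (key 0), mul_pow]

lemma QQ_inv {g : GL (Fin 6) ℂ} (hg : QQ g) : QQ g⁻¹ := by
  obtain ⟨σ, a, hga, hapm, ha4, hadet⟩ := hg
  have hnz := QQ_ne_zero hapm ha4
  have hmul : (g : Matrix (Fin 6) (Fin 6) ℂ) * sp σ⁻¹ (fun j => (a (σ⁻¹ j))⁻¹) = 1 := by
    rw [hga, sp_mul]
    have h1 : (fun j => a (σ⁻¹ j) * (a (σ⁻¹ j))⁻¹) = fun _ => (1:ℂ) := by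
      funext j; exact mul_inv_cancel₀ (hnz _)
    rw [h1, mul_inv_cancel, sp_one]
  have hrep : ((g⁻¹ : GL (Fin 6) ℂ) : Matrix (Fin 6) (Fin 6) ℂ)
      = sp σ⁻¹ (fun j => (a (σ⁻¹ j))⁻¹) := by
    calc ((g⁻¹ : GL (Fin 6) ℂ) : Matrix (Fin 6) (Fin 6) ℂ)
        = ↑g⁻¹ * ((g : Matrix (Fin 6) (Fin 6) ℂ) * sp σ⁻¹ (fun j => (a (σ⁻¹ j))⁻¹)) := by
          rw [hmul, mul_one]
      _ = (↑g⁻¹ * (g : Matrix (Fin 6) (Fin 6) ℂ)) * sp σ⁻¹ (fun j => (a (σ⁻¹ j))⁻¹) := by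
          rw [mul_assoc]
      _ = sp σ⁻¹ (fun j => (a (σ⁻¹ j))⁻¹) := by
          rw [← Units.val_mul, inv_mul_cancel, Units.val_one, one_mul]
  have key : ∀ j, (a (σ⁻¹ j))⁻¹ = (a 0)⁻¹ ∨ (a (σ⁻¹ j))⁻¹ = -(a 0)⁻¹ := by
    intro j
    rcases hapm (σ⁻¹ j) with h|h <;> rw [h]
    · left; rfl
    · right; rw [inv_neg]
  refine ⟨σ⁻¹, fun j => (a (σ⁻¹ j))⁻¹, hrep, ?_, ?_, ?_⟩
  · intro k; exact pm_trans (key k) (key 0)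
  · rw [pm_pow4 (key 0), inv_pow, ha4, inv_one]
  · have hd : ((g⁻¹ : GL (Fin 6) ℂ) : Matrix (Fin 6) (Fin 6) ℂ).det
        * ((g : GL (Fin 6) ℂ) : Matrix (Fin 6) (Fin 6) ℂ).det = 1 := by
      rw [← Matrix.det_mul, ← Units.val_mul, inv_mul_cancel, Units.val_one, Matrix.det_one]
    rw [pm_pow2 (key 0), inv_pow]
    rw [hadet] at hd
    exact eq_inv_of_mul_eq_one_left hd
lemma mem_CW6Sub_QQ {g : GL (Fin 6) ℂ} (hg : g ∈ CW6Sub) : QQ g := by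
  refine Subgroup.closure_induction (fun x hx => ?_) QQ_one
    (fun x y _ _ hx hy => QQ_mul hx hy) (fun x _ hx => QQ_inv hx) hg
  rcases hx with hx | hx
  · obtain ⟨σ, a, ha, hsp, hdet⟩ := hx
    refine ⟨σ, a, hsp, ?_, ?_, ?_⟩
    · intro k
      rcases ha k with h|h <;> rcases ha 0 with h0|h0 <;> rw [h, h0] <;> simp
    · rcases ha 0 with h0|h0 <;> rw [h0] <;> ring
    · rw [hdet]; rcases ha 0 with h0|h0 <;> rw [h0] <;> ring
  · rw [Set.mem_singleton_iff] at hx; subst hx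
    have e : (iId : Matrix (Fin 6) (Fin 6) ℂ) = Matrix.diagonal (fun _ => Complex.I) := rfl
    refine ⟨1, fun _ => Complex.I, ?_, fun k => Or.inl rfl, ?_, ?_⟩
    · rw [e, sp_scalar]
    · norm_num
    · rw [e, Matrix.det_diagonal, Finset.prod_const]
      simp only [Finset.card_univ, Fintype.card_fin]
      calc (Complex.I : ℂ)^6 = Complex.I^4 * Complex.I^2 := by ring
        _ = Complex.I^2 := by norm_num

lemma mem_CW6'Sub_prop {g : GL (Fin 6) ℂ} (hg : g ∈ CW6'Sub) :
    QQ g ∧ gam (g : Matrix (Fin 6) (Fin 6) ℂ) = 1 := by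
  refine Subgroup.closure_induction (fun x hx => ⟨mem_CW6Sub_QQ hx.1, hx.2⟩)
    ⟨QQ_one, by rw [Units.val_one]; exact gam_one⟩
    (fun x y _ _ hx hy => ⟨QQ_mul hx.1 hy.1, ?_⟩)
    (fun x _ hx => ⟨QQ_inv hx.1, ?_⟩) hg
  · obtain ⟨σ, a, hxa, -, -, -⟩ := hx.1
    obtain ⟨τ, b, hyb, -, -, -⟩ := hy.1
    rw [Units.val_mul, hxa, hyb, gam_sp_mul, ← hxa, ← hyb, hx.2, hy.2, one_mul]
  · obtain ⟨σ, a, hxa, hpm, h4, -⟩ := hx.1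
    obtain ⟨ρ, s, hrep, -, -, -⟩ := QQ_inv hx.1
    have h1 : gam ((x⁻¹ : GL (Fin 6) ℂ) : Matrix (Fin 6) (Fin 6) ℂ)
        * gam ((x : GL (Fin 6) ℂ) : Matrix (Fin 6) (Fin 6) ℂ)
        = gam (((x⁻¹ : GL (Fin 6) ℂ) : Matrix (Fin 6) (Fin 6) ℂ) * x) := by
      rw [hrep, hxa, gam_sp_mul]
    rw [hx.2, mul_one] at h1
    rw [h1, ← Units.val_mul, inv_mul_cancel, Units.val_one, gam_one]

def pge (σ : Equiv.Perm (Fin 6)) : GL (Fin 6) ℂ :=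
  ⟨sp σ (fun _ => 1), sp σ⁻¹ (fun _ => 1),
    by rw [sp_mul]; simp only [mul_one]; rw [mul_inv_cancel, sp_one],
    by rw [sp_mul]; simp only [mul_one]; rw [inv_mul_cancel, sp_one]⟩

lemma pge_coe (σ : Equiv.Perm (Fin 6)) :
    ((pge σ : GL (Fin 6) ℂ) : Matrix (Fin 6) (Fin 6) ℂ) = sp σ (fun _ => 1) := rfl

lemma pge_mem {σ : Equiv.Perm (Fin 6)} (hσ : Equiv.Perm.sign σ = 1) : pge σ ∈ CW6'Sub := by
  apply Subgroup.subset_closure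
  refine ⟨Subgroup.subset_closure (Or.inl ⟨σ, fun _ => 1, fun k => Or.inl rfl, pge_coe σ, ?_⟩), ?_⟩
  · rw [pge_coe, sp_det, hσ]; simp
  · rw [pge_coe, gam_sp]; simp

def cyc0 : Equiv.Perm (Fin 6) := Equiv.swap 0 1 * Equiv.swap 1 2
def cyc1 : Equiv.Perm (Fin 6) := Equiv.swap 1 2 * Equiv.swap 2 3
def cyc2 : Equiv.Perm (Fin 6) := Equiv.swap 2 3 * Equiv.swap 3 4
def cyc3 : Equiv.Perm (Fin 6) := Equiv.swap 3 4 * Equiv.swap 4 5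

lemma cyc_centralizer : ∀ ρ : Equiv.Perm (Fin 6),
    ρ * cyc0 = cyc0 * ρ → ρ * cyc1 = cyc1 * ρ → ρ * cyc2 = cyc2 * ρ →
    ρ * cyc3 = cyc3 * ρ → ρ = 1 := by decide

lemma sign_cyc0 : Equiv.Perm.sign cyc0 = 1 := by decide
lemma sign_cyc1 : Equiv.Perm.sign cyc1 = 1 := by decide
lemma sign_cyc2 : Equiv.Perm.sign cyc2 = 1 := by decide
lemma sign_cyc3 : Equiv.Perm.sign cyc3 = 1 := by decide

lemma center_scalar {z : GL (Fin 6) ℂ} (hz : z ∈ CW6'Sub)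
    (hc : ∀ h ∈ CW6'Sub, z * h = h * z) :
    ∃ ε : ℂ, ε^2 = 1 ∧ ((z : Matrix (Fin 6) (Fin 6) ℂ) = sp 1 (fun _ => ε)) := by
  obtain ⟨⟨ρ, c, hrep, hpm, h4, -⟩, hgam⟩ := mem_CW6'Sub_prop hz
  have hnz := QQ_ne_zero hpm h4
  have main : ∀ σ : Equiv.Perm (Fin 6), Equiv.Perm.sign σ = 1 →
      ρ * σ = σ * ρ ∧ ∀ j, c (σ j) = c j := by
    intro σ hσ
    have h := congrArg Units.val (hc (pge σ) (pge_mem hσ))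
    rw [Units.val_mul, Units.val_mul, hrep, pge_coe, sp_mul, sp_mul] at h
    obtain ⟨hperm, hfun⟩ := sp_apply_eq _ _ _ _ h (fun j => by simpa using hnz j)
    refine ⟨hperm, fun j => ?_⟩
    have := congrFun hfun j
    simpa using this
  have hρ : ρ = 1 := cyc_centralizer ρ (main cyc0 sign_cyc0).1 (main cyc1 sign_cyc1).1
    (main cyc2 sign_cyc2).1 (main cyc3 sign_cyc3).1
  have e1 : c 1 = c 0 := by
    have h := (main cyc0 sign_cyc0).2 0; rwa [show cyc0 0 = 1 by decide] at h
  have e2 : c 2 = c 0 := by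
    have h := (main cyc0 sign_cyc0).2 1; rw [show cyc0 1 = 2 by decide] at h
    exact h.trans e1
  have e3 : c 3 = c 0 := by
    have h := (main cyc1 sign_cyc1).2 2; rw [show cyc1 2 = 3 by decide] at h
    exact h.trans e2
  have e4 : c 4 = c 0 := by
    have h := (main cyc2 sign_cyc2).2 3; rw [show cyc2 3 = 4 by decide] at h
    exact h.trans e3
  have e5 : c 5 = c 0 := by
    have h := (main cyc3 sign_cyc3).2 4; rw [show cyc3 4 = 5 by decide] at h
    exact h.trans e4
  refine ⟨c 0, ?_, ?_⟩
  · rw [hrep, gam_sp, Fin.prod_univ_six, e1, e2, e3, e4, e5] at hgam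
    linear_combination hgam - (c 0)^2 * h4
  · have hcc : c = fun _ => c 0 := by
      funext j; fin_cases j
      · rfl
      · exact e1
      · exact e2
      · exact e3
      · exact e4
      · exact e5
    rw [hrep, hρ, hcc]

/-- The exact sequence `1 → A₆'/Z(𝒲₆') → 𝒲₆'/Z(𝒲₆') → S₆ → 1` is not split:
there is no set-theoretic section `f` of `π` with values in `𝒲₆'` which is a
group morphism modulo the center `Z(𝒲₆')`. -/
theorem stmt_9 :
    ¬ ∃ f : Equiv.Perm (Fin 6) → GL (Fin 6) ℂ,
      (∀ σ : Equiv.Perm (Fin 6), f σ ∈ CW6'Sub ∧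
        ∃ t : Fin 6 → ℂ, ((f σ) : Matrix (Fin 6) (Fin 6) ℂ) = sp σ t) ∧
      (∀ σ τ : Equiv.Perm (Fin 6),
        (f (σ * τ))⁻¹ * (f σ * f τ) ∈
          {z : GL (Fin 6) ℂ | z ∈ CW6'Sub ∧ ∀ h ∈ CW6'Sub, z * h = h * z}) := by
  rintro ⟨f, h1, h2⟩
  choose hmem t ht using h1
  -- basic properties of the lifts
  have props : ∀ σ, (∀ k, t σ k ≠ 0) ∧ (∏ j, t σ j) = 1 ∧
      ((f σ : Matrix (Fin 6) (Fin 6) ℂ).det = (t σ 0)^2) ∧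
      (∀ k, t σ k = t σ 0 ∨ t σ k = -(t σ 0)) := by
    intro σ
    obtain ⟨⟨σ', t', hrep', hpm', h4', hdet'⟩, hgam⟩ := mem_CW6'Sub_prop (hmem σ)
    have hnz' := QQ_ne_zero hpm' h4'
    obtain ⟨hσ, hT⟩ := sp_apply_eq σ σ' (t σ) t' ((ht σ).symm.trans hrep') hnz'
    rw [← hT] at hpm' h4' hdet'
    refine ⟨QQ_ne_zero hpm' h4', ?_, hdet', hpm'⟩
    rw [ht σ, gam_sp] at hgam; exact hgam
  -- the cocycle takes scalar values
  have key : ∀ σ τ : Equiv.Perm (Fin 6), ∃ ε : ℂ, ε^2 = 1 ∧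
      ∀ j, t σ (τ j) * t τ j = t (σ*τ) j * ε := by
    intro σ τ
    obtain ⟨hzmem, hzc⟩ := h2 σ τ
    obtain ⟨ε, hε2, hεrep⟩ := center_scalar hzmem hzc
    refine ⟨ε, hε2, ?_⟩
    have hεne : ε ≠ 0 := by intro h0; rw [h0] at hε2; norm_num at hε2
    have hfe : f σ * f τ = f (σ*τ) * ((f (σ*τ))⁻¹ * (f σ * f τ)) := by group
    have hm := congrArg Units.val hfe
    rw [Units.val_mul, Units.val_mul, hεrep, ht σ, ht τ, ht (σ*τ), sp_mul, sp_mul] at hm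
    obtain ⟨-, hfun⟩ := sp_apply_eq _ _ _ _ hm
      (fun j => mul_ne_zero ((props (σ*τ)).1 _) hεne)
    intro j
    have := congrFun hfun j
    simpa using this
  -- f 1 is scalar
  have h11 := h2 1 1
  rw [mul_one] at h11
  have hf1 : (f 1)⁻¹ * (f 1 * f 1) = f 1 := by group
  rw [hf1] at h11
  obtain ⟨ε₀, hε₀2, hε₀rep⟩ := center_scalar h11.1 h11.2
  have hε₀ne : ε₀ ≠ 0 := by intro h0; rw [h0] at hε₀2; norm_num at hε₀2
  have ht1 : ∀ j, t 1 j = ε₀ := by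
    have h := sp_apply_eq 1 1 (t 1) (fun _ => ε₀) ((ht 1).symm.trans hε₀rep)
      (fun j => hε₀ne)
    intro j; exact congrFun h.2 j
  -- the three disjoint transpositions
  obtain ⟨ε₁, hε₁2, hkey1⟩ := key (Equiv.swap 0 1) (Equiv.swap 0 1)
  have hττ : Equiv.swap (0:Fin 6) 1 * Equiv.swap 0 1 = 1 := Equiv.swap_mul_self 0 1
  have hsq : ∀ j, t (Equiv.swap 0 1) (Equiv.swap 0 1 j) * t (Equiv.swap 0 1) j = ε₀ * ε₁ := by
    intro j
    have h := hkey1 j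
    rw [hττ, ht1 j] at h
    exact h
  -- disjointness: t τ 2 = t τ 3 and t τ 4 = t τ 5
  have step : ∀ s' : Equiv.Perm (Fin 6), ∀ a b b' : Fin 6,
      s' * Equiv.swap 0 1 = Equiv.swap 0 1 * s' →
      s' a = a → Equiv.swap 0 1 a = a →
      s' b = b' → Equiv.swap 0 1 b = b →
      t (Equiv.swap 0 1) b = t (Equiv.swap 0 1) b' := by
    intro s' a b b' hcomm ha1 ha2 hb1 hb2
    obtain ⟨εa, hεa2, hka⟩ := key (Equiv.swap 0 1) s'
    obtain ⟨εb, hεb2, hkb⟩ := key s' (Equiv.swap 0 1)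
    simp only [hcomm] at hkb
    have h4a := hka a; rw [ha1] at h4a
    have h4b := hkb a; rw [ha2] at h4b
    have hεab : εa = εb := by
      have hTa : t (Equiv.swap 0 1 * s') a ≠ 0 := (props _).1 a
      apply mul_left_cancel₀ hTa
      rw [← h4a, ← h4b]; ring
    have h2a := hka b; rw [hb1] at h2a
    have h2b := hkb b; rw [hb2] at h2b
    have hsb : t s' b ≠ 0 := (props s').1 b
    apply mul_left_cancel₀ hsb
    calc t s' b * t (Equiv.swap 0 1) b = t (Equiv.swap 0 1 * s') b * εb := h2b
      _ = t (Equiv.swap 0 1 * s') b * εa := by rw [hεab]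
      _ = t (Equiv.swap 0 1) b' * t s' b := h2a.symm
      _ = t s' b * t (Equiv.swap 0 1) b' := by ring
  have ht23 : t (Equiv.swap 0 1) 2 = t (Equiv.swap 0 1) 3 :=
    step (Equiv.swap 2 3) 4 2 3 (by decide) (by decide) (by decide) (by decide) (by decide)
  have ht45 : t (Equiv.swap 0 1) 4 = t (Equiv.swap 0 1) 5 :=
    step (Equiv.swap 4 5) 2 4 5 (by decide) (by decide) (by decide) (by decide) (by decide)
  -- product computation
  have hprod := (props (Equiv.swap 0 1)).2.1
  rw [Fin.prod_univ_six, ht23, ht45] at hprod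
  have e01 : t (Equiv.swap 0 1) 1 * t (Equiv.swap 0 1) 0 = ε₀ * ε₁ := by
    have h := hsq 0; rwa [show Equiv.swap (0:Fin 6) 1 0 = 1 by decide] at h
  have e22 : t (Equiv.swap 0 1) 3 * t (Equiv.swap 0 1) 3 = ε₀ * ε₁ := by
    have h := hsq 3; rwa [show Equiv.swap (0:Fin 6) 1 3 = 3 by decide] at h
  have e44 : t (Equiv.swap 0 1) 5 * t (Equiv.swap 0 1) 5 = ε₀ * ε₁ := by
    have h := hsq 5; rwa [show Equiv.swap (0:Fin 6) 1 5 = 5 by decide] at h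
  have hε2 : (ε₀ * ε₁)^2 = 1 := by rw [mul_pow, hε₀2, hε₁2, one_mul]
  have h3 : (ε₀ * ε₁) * (ε₀ * ε₁) * (ε₀ * ε₁) = 1 := by
    calc (ε₀ * ε₁) * (ε₀ * ε₁) * (ε₀ * ε₁)
        = (t (Equiv.swap 0 1) 1 * t (Equiv.swap 0 1) 0)
          * (t (Equiv.swap 0 1) 3 * t (Equiv.swap 0 1) 3)
          * (t (Equiv.swap 0 1) 5 * t (Equiv.swap 0 1) 5) := by rw [e01, e22, e44]
      _ = t (Equiv.swap 0 1) 0 * t (Equiv.swap 0 1) 1 * t (Equiv.swap 0 1) 3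
          * t (Equiv.swap 0 1) 3 * t (Equiv.swap 0 1) 5 * t (Equiv.swap 0 1) 5 := by ring
      _ = 1 := hprod
  have hεval : ε₀ * ε₁ = 1 := by linear_combination h3 - (ε₀ * ε₁) * hε2
  -- t τ 0 squared is 1
  have h00 : t (Equiv.swap 0 1) 0 * t (Equiv.swap 0 1) 0 = 1 := by
    rw [hεval] at e22
    rcases (props (Equiv.swap 0 1)).2.2.2 3 with h|h
    · rw [h] at e22; exact e22
    · rw [h] at e22; linear_combination e22
  -- determinant contradiction
  have hdet := (props (Equiv.swap 0 1)).2.2.1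
  rw [ht (Equiv.swap 0 1), sp_det, (props (Equiv.swap 0 1)).2.1,
    Equiv.Perm.sign_swap (by decide), pow_two, h00] at hdet
  simp at hdet
  norm_num at hdet
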